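/- arXiv:1504.00052 — 2 statements merged into one kernel-verified Lean document; each statement's English description precedes it below -/
import Mathlib

section
/- Let Q be a finite nonempty set (or multiset) of permutations of {1,...,n}, let h be a real-valued function on sequences of length n, and let c be a fixed sequence of length n. If σ* is drawn uniformly at random from Q, and rank ties among equal values of h are broken uniformly at random, then for every k ∈ {1,...,|Q|}, the probability that h(σ*c) has rank k among the multiset {h(σc) : σ ∈ Q} equals 1/|Q|. -/
set_option linter.unusedSectionVars false


/-- The sequence `c` permuted by `σ`. -/
def permSeq {n : ℕ} {α : Type*} (σ : Equiv.Perm (Fin n)) (c : Fin n → α) : Fin n → α :=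
  fun i => c (σ i)

/-- Rank (starting from 1) of the entry indexed by `i` among the values `H j`,
with ties among equal values broken according to the priorities `p`. -/
noncomputable def tbRank {ι : Type*} [Fintype ι] [DecidableEq ι] (H : ι → ℝ) {m : ℕ}
    (p : ι ≃ Fin m) (i : ι) : ℕ :=
  1 + (Finset.univ.filter (fun j => H j < H i ∨ (H j = H i ∧ p j < p i))).card

open Finset

section aux
variable {ι : Type*} [Fintype ι] [DecidableEq ι] (H : ι → ℝ) {m : ℕ} (p : ι ≃ Fin m)

noncomputable def tbKey (i : ι) : ℝ ×ₗ Fin m := toLex (H i, p i)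

lemma tbKey_inj : Function.Injective (tbKey H p) := by
  intro i j hij
  have h2 := congrArg (fun x => (ofLex x).2) hij
  exact p.injective h2

lemma tbRank_eq (i : ι) :
    tbRank H p i = 1 + (univ.filter (fun j => tbKey H p j < tbKey H p i)).card := by
  unfold tbRank
  congr 1
  apply Finset.card_nbij id (fun a ha => ?_) (fun a ha b hb hab => hab) (fun a ha => ⟨a, ?_, rfl⟩)
  · simp only [mem_coe, mem_filter, mem_univ, true_and] at ha ⊢
    simpa [tbKey, Prod.Lex.lt_iff] using ha
  · simp only [Set.mem_image, mem_coe, mem_filter, mem_univ, true_and] at ha ⊢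
    simpa [tbKey, Prod.Lex.lt_iff] using ha

lemma tbRank_existsUnique (hm : Fintype.card ι = m) (k : ℕ) (hk1 : 1 ≤ k) (hk2 : k ≤ m) :
    ∃! i : ι, tbRank H p i = k := by
  set r : ι → ℕ := fun i => (univ.filter (fun j => tbKey H p j < tbKey H p i)).card with hr
  have hm0 : 0 < m := lt_of_lt_of_le hk1 hk2
  have hbound : ∀ i, r i < m := by
    intro i
    have hsub : (univ.filter (fun j => tbKey H p j < tbKey H p i)) ⊆ univ.erase i := by
      intro j hj
      simp only [mem_filter, mem_univ, true_and] at hj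
      refine mem_erase.2 ⟨?_, mem_univ _⟩
      rintro rfl; exact lt_irrefl _ hj
    calc r i ≤ (univ.erase i).card := Finset.card_le_card hsub
      _ < univ.card := Finset.card_erase_lt_of_mem (mem_univ i)
      _ = m := hm
  set g : ι → Fin m := fun i => ⟨r i, hbound i⟩ with hg
  have hginj : Function.Injective g := by
    intro i i' he
    have he' : r i = r i' := congrArg Fin.val he
    rcases lt_trichotomy (tbKey H p i) (tbKey H p i') with hlt | heq | hgt
    · exfalso
      have : (univ.filter (fun j => tbKey H p j < tbKey H p i)) ⊂
          (univ.filter (fun j => tbKey H p j < tbKey H p i')) := by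
        refine Finset.ssubset_iff_of_subset (fun j hj => ?_) |>.2 ⟨i, ?_, ?_⟩
        · simp only [mem_filter, mem_univ, true_and] at hj ⊢
          exact hj.trans hlt
        · simp [hlt]
        · simp
      exact absurd he' (Nat.ne_of_lt (Finset.card_lt_card this))
    · exact tbKey_inj H p heq
    · exfalso
      have : (univ.filter (fun j => tbKey H p j < tbKey H p i')) ⊂
          (univ.filter (fun j => tbKey H p j < tbKey H p i)) := by
        refine Finset.ssubset_iff_of_subset (fun j hj => ?_) |>.2 ⟨i', ?_, ?_⟩
        · simp only [mem_filter, mem_univ, true_and] at hj ⊢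
          exact hj.trans hgt
        · simp [hgt]
        · simp
      exact absurd he'.symm (Nat.ne_of_lt (Finset.card_lt_card this))
  have hgbij : Function.Bijective g :=
    (Fintype.bijective_iff_injective_and_card g).2 ⟨hginj, by simp [hm]⟩
  obtain ⟨i, hi⟩ := hgbij.2 ⟨k - 1, by omega⟩
  refine ⟨i, ?_, fun j hj => ?_⟩
  · show tbRank H p i = k
    rw [tbRank_eq]
    have hri : r i = k - 1 := by
      have := congrArg Fin.val hi; simpa using this
    simp only [r] at hri
    omega
  · apply hginj
    have hj' : tbRank H p j = k := hj
    rw [tbRank_eq] at hj'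
    have hji : r j = k - 1 := by simp only [r]; omega
    rw [hi]
    exact Fin.ext (by simpa using hji)
end aux


/-- If `σ*` is drawn uniformly at random from a finite nonempty set `Q` of permutations and
ties are broken uniformly at random, then for every `k ∈ {1, …, |Q|}` the probability that
`h(σ* c)` has rank `k` among the multiset `{h(σ c) | σ ∈ Q}` equals `1/|Q|`. -/
theorem rank_uniform_fixed_sequence {α : Type*} (n : ℕ)
    (Q : Finset (Equiv.Perm (Fin n))) (hQ : Q.Nonempty)
    (h : (Fin n → α) → ℝ) (c : Fin n → α)
    (k : ℕ) (hk1 : 1 ≤ k) (hk2 : k ≤ Q.card) :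
    (((Finset.univ : Finset (↥Q × (↥Q ≃ Fin Q.card))).filter
        (fun sp => tbRank (fun σ : ↥Q => h (permSeq (σ : Equiv.Perm (Fin n)) c)) sp.2 sp.1
          = k)).card : ℝ)
      / ((Finset.univ : Finset (↥Q × (↥Q ≃ Fin Q.card))).card : ℝ)
      = 1 / Q.card := by
  classical
  set H : ↥Q → ℝ := fun σ => h (permSeq (σ : Equiv.Perm (Fin n)) c) with hH
  have hcard : Fintype.card ↥Q = Q.card := Fintype.card_coe Q
  have hEU : ∀ p : ↥Q ≃ Fin Q.card, ∃! i : ↥Q, tbRank H p i = k :=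
    fun p => tbRank_existsUnique H p hcard k hk1 hk2
  have hnum : ((Finset.univ : Finset (↥Q × (↥Q ≃ Fin Q.card))).filter
      (fun sp => tbRank H sp.2 sp.1 = k)).card
      = Fintype.card (↥Q ≃ Fin Q.card) := by
    rw [← Finset.card_univ]
    apply Finset.card_bij (fun sp _ => sp.2)
    · intro sp _; exact Finset.mem_univ _
    · intro sp hsp sp' hsp' he
      simp only [Finset.mem_filter, Finset.mem_univ, true_and] at hsp hsp'
      obtain ⟨i, _, huniq⟩ := hEU sp.2
      have h1 : sp.1 = i := huniq _ hsp
      have h2 : sp'.1 = i := huniq _ (by rw [he]; exact hsp')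
      exact Prod.ext (h1.trans h2.symm) he
    · intro p _
      obtain ⟨i, hi, _⟩ := hEU p
      exact ⟨(i, p), Finset.mem_filter.2 ⟨Finset.mem_univ _, hi⟩, rfl⟩
  have hden : ((Finset.univ : Finset (↥Q × (↥Q ≃ Fin Q.card))).card)
      = Q.card * Fintype.card (↥Q ≃ Fin Q.card) := by
    simp [Finset.card_univ, Fintype.card_prod, hcard]
  have hQ0 : (Q.card : ℝ) ≠ 0 := by
    exact_mod_cast (Finset.card_pos.2 hQ).ne'
  have hE0 : (Fintype.card (↥Q ≃ Fin Q.card) : ℝ) ≠ 0 := by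
    have : Nonempty (↥Q ≃ Fin Q.card) := ⟨Fintype.equivFinOfCardEq hcard⟩
    exact_mod_cast Fintype.card_pos.ne'
  rw [hnum, hden]
  push_cast
  field_simp
end

section
/- Let C = (Z₁,...,Z_{t+w}) be i.i.d. examples Zᵢ = (Xᵢ,Yᵢ) with labels Yᵢ ∈ {0,1}, let g be a fixed classifier, and define the working-set error E_c = (1/w)·Σ_{i=t+1}^{t+w} 1[g(xᵢ) ≠ yᵢ] for a sequence c. For an assignment a ∈ {0,1}^w let C(a) denote C with the last w labels replaced by a, and define the likely set L = {a ∈ {0,1}^w : rank(h(C(a)), {h(σ(σ*)⁻¹C(a)) : σ ∈ Q}) ≤ ⌈(1−δ)|Q|⌉}, where σ* is uniform on Q independent of C. Then Pr[E_C ≤ max_{a ∈ L} E_{C(a)}] ≥ 1 − δ. -/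
open MeasureTheory ProbabilityTheory
open scoped ENNReal NNReal

instance {n : ℕ} (Q : Finset (Equiv.Perm (Fin n))) : MeasurableSpace ↥Q := ⊤
instance {n m : ℕ} (Q : Finset (Equiv.Perm (Fin n))) : MeasurableSpace (↥Q ≃ Fin m) := ⊤

/-- `c` with the labels of the last `w` examples replaced by the assignment `a`. -/
def assign {β : Type*} (t w : ℕ) (c : Fin (t + w) → β × Bool) (a : Fin w → Bool) :
    Fin (t + w) → β × Bool :=
  fun i => if h : (i : ℕ) < t then c i else ((c i).1, a ⟨(i : ℕ) - t, by omega⟩)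

/-- Error rate of classifier `g` on the last `w` examples of `c`. -/
noncomputable def errRate {β : Type*} (t w : ℕ) (g : β → Bool)
    (c : Fin (t + w) → β × Bool) : ℝ :=
  (1 / (w : ℝ)) *
    (Finset.univ.filter (fun i : Fin (t + w) => t ≤ (i : ℕ) ∧ g (c i).1 ≠ (c i).2)).card

lemma assign_eq_self {β : Type*} {t w : ℕ} (c : Fin (t + w) → β × Bool)
    (a : Fin w → Bool)
    (ha : ∀ i : Fin w, ∀ hj : t + (i : ℕ) < t + w, a i = (c ⟨t + (i : ℕ), hj⟩).2) :
    assign t w c a = c := by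
  funext i
  unfold assign
  split
  · rfl
  · next hi =>
    have hiw : (i : ℕ) - t < w := by omega
    have hlt : t + (((⟨(i : ℕ) - t, hiw⟩ : Fin w)) : ℕ) < t + w := by simp; omega
    rw [ha ⟨(i : ℕ) - t, hiw⟩ hlt]
    have h2 : (⟨t + ((⟨(i : ℕ) - t, hiw⟩ : Fin w) : ℕ), hlt⟩ : Fin (t + w)) = i := by
      apply Fin.ext; simp; omega
    rw [h2]

lemma card_tbRank_le {ι : Type*} [Fintype ι] [DecidableEq ι] (H : ι → ℝ) {m : ℕ}
    (p : ι ≃ Fin m) (k : ℕ) :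
    (Finset.univ.filter (fun i => tbRank H p i ≤ k)).card = min k (Fintype.card ι) := by
  classical
  set n := Fintype.card ι with hn
  set f : ι → Lex (ℝ × Fin m) := fun i => toLex (H i, p i) with hf
  have hfinj : Function.Injective f := by
    intro i j hij
    apply p.injective
    exact congrArg (fun x => (ofLex x).2) hij
  set ρ : ι → ℕ := fun i => (Finset.univ.filter (fun j => f j < f i)).card with hρ
  have hcond : ∀ i j : ι, (H j < H i ∨ (H j = H i ∧ p j < p i)) ↔ f j < f i := by
    intro i j
    simp only [hf]
    exact (Prod.Lex.lt_iff (x := (toLex (H j, p j) : Lex (ℝ × Fin m))) (y := toLex (H i, p i))).symm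
  have hrank : ∀ i, tbRank H p i = 1 + ρ i := by
    intro i
    unfold tbRank
    simp only [hρ]
    exact congrArg (fun s => 1 + Finset.card s) (Finset.filter_congr (fun j _ => hcond i j))
  have hρlt : ∀ i, ρ i < n := by
    intro i
    have hsub : Finset.univ.filter (fun j => f j < f i) ⊆ Finset.univ.erase i := by
      intro j hj
      rw [Finset.mem_filter] at hj
      refine Finset.mem_erase.mpr ⟨?_, Finset.mem_univ j⟩
      rintro rfl
      exact lt_irrefl _ hj.2
    have h0 : 0 < n := Fintype.card_pos_iff.mpr ⟨i⟩
    calc ρ i ≤ (Finset.univ.erase i).card := Finset.card_le_card hsub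
      _ < n := by
        rw [Finset.card_erase_of_mem (Finset.mem_univ i), Finset.card_univ, ← hn]
        omega
  have hmono : ∀ i j, f i < f j → ρ i < ρ j := by
    intro i j hij
    apply Finset.card_lt_card
    rw [Finset.ssubset_def]
    constructor
    · intro x hx
      rw [Finset.mem_filter] at hx ⊢
      exact ⟨hx.1, lt_trans hx.2 hij⟩
    · intro hsub
      have hmem : i ∈ Finset.univ.filter (fun x => f x < f j) :=
        Finset.mem_filter.mpr ⟨Finset.mem_univ _, hij⟩
      have := hsub hmem
      rw [Finset.mem_filter] at this
      exact lt_irrefl _ this.2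
  have hρinj : Function.Injective ρ := by
    intro i j hij
    by_contra hne
    have hfne : f i ≠ f j := fun e => hne (hfinj e)
    rcases lt_or_gt_of_ne hfne with h1 | h1
    · exact absurd hij (Nat.ne_of_lt (hmono _ _ h1))
    · exact absurd hij.symm (Nat.ne_of_lt (hmono _ _ h1))
  set e : ι → Fin n := fun i => ⟨ρ i, hρlt i⟩ with he
  have hbij : Function.Bijective e := by
    have hinj : Function.Injective e := fun i j hij => hρinj (congrArg Fin.val hij)
    exact (Fintype.bijective_iff_injective_and_card e).mpr ⟨hinj, by rw [Fintype.card_fin]⟩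
  calc (Finset.univ.filter (fun i => tbRank H p i ≤ k)).card
      = (Finset.univ.filter (fun i => ((e i : ℕ) < k))).card := by
        congr 1
        apply Finset.filter_congr
        intro i _
        rw [hrank i]
        show 1 + ρ i ≤ k ↔ ρ i < k
        omega
    _ = Fintype.card {i : ι // (e i : ℕ) < k} := (Fintype.card_subtype _).symm
    _ = Fintype.card {v : Fin n // (v : ℕ) < k} :=
        Fintype.card_congr (Equiv.subtypeEquiv (Equiv.ofBijective e hbij) (fun i => Iff.rfl))
    _ = (Finset.univ.filter (fun v : Fin n => (v : ℕ) < k)).card := Fintype.card_subtype _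
    _ = ∑ v : Fin n, if (v : ℕ) < k then 1 else 0 := Finset.card_filter _ _
    _ = ∑ j ∈ Finset.range n, if j < k then 1 else 0 := Fin.sum_univ_eq_sum_range (fun j => if j < k then (1:ℕ) else 0) n
    _ = ((Finset.range n).filter (fun j => j < k)).card := (Finset.card_filter _ _).symm
    _ = (Finset.range (min k n)).card := by
        congr 1
        ext x
        simp only [Finset.mem_filter, Finset.mem_range]
        omega
    _ = min k n := Finset.card_range _

/-- Theorem 2 of the paper (worst likely assignment bound): with probability at least
`1 − δ`, the working-set error `E_C` is bounded by the largest error `E_{C(a)}` over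
assignments `a` in the likely set `L`. -/
theorem worst_likely_assignment_bound
    {Ω β : Type*} [MeasurableSpace Ω] [MeasurableSpace β]
    (μ : Measure Ω) [IsProbabilityMeasure μ]
    (t w : ℕ) (hw : 0 < w)
    (C : Ω → Fin (t + w) → β × Bool) (hC : Measurable C)
    (hIndepCoord : iIndepFun (fun i ω => C ω i) μ)
    (hIdent : ∀ i j : Fin (t + w), IdentDistrib (fun ω => C ω i) (fun ω => C ω j) μ μ)
    (g : β → Bool)
    (h : (Fin (t + w) → β × Bool) → ℝ) (hh : Measurable h)
    (Q : Finset (Equiv.Perm (Fin (t + w)))) (hQ : Q.Nonempty)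
    (S : Ω → ↥Q) (T : Ω → (↥Q ≃ Fin Q.card))
    (hSTmeas : Measurable (fun ω => (S ω, T ω)))
    (hne : (Finset.univ : Finset (↥Q × (↥Q ≃ Fin Q.card))).Nonempty)
    (hUnif : μ.map (fun ω => (S ω, T ω)) = (PMF.uniformOfFinset Finset.univ hne).toMeasure)
    (hInd : IndepFun C (fun ω => (S ω, T ω)) μ)
    (δ : ℝ) (hδ0 : 0 < δ) (hδ1 : δ < 1)
    (L : Ω → Finset (Fin w → Bool))
    (hL : ∀ ω, L ω = Finset.univ.filter (fun a : Fin w → Bool =>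
      tbRank
        (fun σ : ↥Q => h (permSeq (σ : Equiv.Perm (Fin (t + w)))
          (permSeq ((S ω : Equiv.Perm (Fin (t + w))))⁻¹ (assign t w (C ω) a))))
        (T ω) (S ω) ≤ ⌈(1 - δ) * (Q.card : ℝ)⌉₊)) :
    μ {ω | ∃ hLne : (L ω).Nonempty,
        errRate t w g (C ω)
          ≤ (L ω).sup' hLne (fun a => errRate t w g (assign t w (C ω) a))}
      ≥ ENNReal.ofReal (1 - δ) := by
  classical
  set k := ⌈(1 - δ) * (Q.card : ℝ)⌉₊ with hk
  have hQc : 0 < Q.card := Finset.card_pos.mpr hQ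
  have hδ' : (0:ℝ) ≤ 1 - δ := by linarith
  have hk_le : k ≤ Q.card := by
    rw [hk]
    refine Nat.ceil_le.mpr ?_
    nlinarith [Nat.cast_nonneg (α := ℝ) Q.card]
  have hk_ge : (1 - δ) * (Q.card : ℝ) ≤ (k : ℝ) := Nat.le_ceil _
  set Hfun : (Fin (t + w) → β × Bool) → ↥Q → ℝ :=
    fun c τ => h (permSeq (τ : Equiv.Perm (Fin (t + w))) c) with hHfun
  set A : Set Ω := {ω | tbRank
      (Hfun (permSeq ((S ω : Equiv.Perm (Fin (t + w))))⁻¹ (C ω))) (T ω) (S ω) ≤ k} with hA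
  -- Step 1: A is contained in the target event
  have hsub : A ⊆ {ω | ∃ hLne : (L ω).Nonempty,
      errRate t w g (C ω)
        ≤ (L ω).sup' hLne (fun a => errRate t w g (assign t w (C ω) a))} := by
    intro ω hω
    set a0 : Fin w → Bool := fun i => ((C ω) ⟨t + (i : ℕ), by omega⟩).2 with ha0
    have hastar : assign t w (C ω) a0 = C ω := by
      apply assign_eq_self
      intro i hj
      rfl
    have hmem : a0 ∈ L ω := by
      rw [hL ω, Finset.mem_filter]
      refine ⟨Finset.mem_univ _, ?_⟩
      rw [hastar]
      exact hω
    refine ⟨⟨a0, hmem⟩, ?_⟩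
    calc errRate t w g (C ω) = errRate t w g (assign t w (C ω) a0) := by rw [hastar]
      _ ≤ _ := Finset.le_sup' (fun a => errRate t w g (assign t w (C ω) a)) hmem
  -- measurability helpers
  have hmono_perm : ∀ π : Equiv.Perm (Fin (t + w)),
      Measurable (permSeq π : (Fin (t + w) → β × Bool) → (Fin (t + w) → β × Bool)) :=
    fun π => measurable_pi_lambda _ fun i => measurable_pi_apply (π i)
  have hHτ : ∀ τ : ↥Q, Measurable (fun c : Fin (t + w) → β × Bool => Hfun c τ) :=
    fun τ => hh.comp (hmono_perm _)
  have hrank_meas : ∀ (σ : ↥Q) (p : ↥Q ≃ Fin Q.card),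
      Measurable (fun c : Fin (t + w) → β × Bool => tbRank (Hfun c) p σ) := by
    intro σ p
    unfold tbRank
    simp only [Finset.card_filter]
    apply Measurable.add measurable_const
    apply Finset.measurable_sum
    intro τ _
    refine Measurable.ite ?_ measurable_const measurable_const
    have heq : {c : Fin (t + w) → β × Bool |
        Hfun c τ < Hfun c σ ∨ (Hfun c τ = Hfun c σ ∧ p τ < p σ)}
        = {c | Hfun c τ < Hfun c σ}
          ∪ ({c | Hfun c τ = Hfun c σ} ∩ {c | p τ < p σ}) := by
      ext c; simp [Set.mem_union, Set.mem_inter_iff]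
    rw [heq]
    exact (measurableSet_lt (hHτ τ) (hHτ σ)).union
      ((measurableSet_eq_fun (hHτ τ) (hHτ σ)).inter (MeasurableSet.const _))
  have hBmeas : ∀ (σ : ↥Q) (p : ↥Q ≃ Fin Q.card),
      MeasurableSet {c : Fin (t + w) → β × Bool | tbRank (Hfun c) p σ ≤ k} :=
    fun σ p => hrank_meas σ p (MeasurableSpace.measurableSet_top (s := {n | n ≤ k}))
  -- the law of C is an iid product law
  have hmeascoord : ∀ i : Fin (t + w), Measurable fun ω => C ω i :=
    fun i => (measurable_pi_apply i).comp hC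
  have hwpos : 0 < t + w := by omega
  set i0 : Fin (t + w) := ⟨0, hwpos⟩ with hi0
  set m0 := μ.map (fun ω => C ω i0) with hm0
  haveI hprob : ∀ i : Fin (t + w), IsProbabilityMeasure (μ.map fun ω => C ω i) :=
    fun i => Measure.isProbabilityMeasure_map (hmeascoord i).aemeasurable
  haveI : IsProbabilityMeasure m0 := hprob i0
  have hpi : Measure.pi (fun _ : Fin (t + w) => m0) = μ.map C := by
    have h1 : Measure.pi (fun i : Fin (t + w) => μ.map fun ω => C ω i) = μ.map C := by
      apply Measure.pi_eq
      intro s hs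
      rw [Measure.map_apply hC (MeasurableSet.univ_pi hs)]
      have hpre : C ⁻¹' Set.pi Set.univ s
          = ⋂ i ∈ (Finset.univ : Finset (Fin (t + w))), (fun ω => C ω i) ⁻¹' s i := by
        ext ω; simp [Set.mem_pi]
      rw [hpre, hIndepCoord.measure_inter_preimage_eq_mul _ (fun i _ => hs i)]
      refine Finset.prod_congr rfl fun i _ => ?_
      rw [Measure.map_apply (hmeascoord i) (hs i)]
    rw [← h1]
    congr 1
    funext i
    exact ((hIdent i i0).map_eq).symm
  have hinv : ∀ π : Equiv.Perm (Fin (t + w)),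
      (μ.map C).map (permSeq π) = μ.map C := by
    intro π
    rw [← hpi]
    have hmp := MeasureTheory.measurePreserving_piCongrLeft
      (fun _ : Fin (t + w) => m0) (π.symm : Fin (t + w) ≃ Fin (t + w))
    have hcoe : ⇑(MeasurableEquiv.piCongrLeft (fun _ : Fin (t + w) => β × Bool)
        (π.symm : Fin (t + w) ≃ Fin (t + w))) = permSeq π := by
      funext x
      funext i
      rw [MeasurableEquiv.coe_piCongrLeft]
      have h1 := Equiv.piCongrLeft_apply_apply (fun _ : Fin (t + w) => β × Bool)
        (π.symm : Fin (t + w) ≃ Fin (t + w)) x (π i)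
      simp only [Equiv.symm_apply_apply] at h1
      simpa [permSeq] using h1
    have h2 := hmp.map_eq
    rw [hcoe] at h2
    exact h2
  -- decompose the event A
  set N := (Finset.univ : Finset (↥Q × (↥Q ≃ Fin Q.card))).card with hNdef
  set Bs : ↥Q × (↥Q ≃ Fin Q.card) → Set (Fin (t + w) → β × Bool) :=
    fun x => {c | tbRank (Hfun c) x.2 x.1 ≤ k} with hBs
  set Ds : ↥Q × (↥Q ≃ Fin Q.card) → Set (Fin (t + w) → β × Bool) :=
    fun x => permSeq ((x.1 : Equiv.Perm (Fin (t + w))))⁻¹ ⁻¹' Bs x with hDs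
  set ST := fun ω => (S ω, T ω) with hST
  have hDmeas : ∀ x : ↥Q × (↥Q ≃ Fin Q.card), MeasurableSet (Ds x) :=
    fun x => (hmono_perm _) (hBmeas x.1 x.2)
  have hAeq : A = ⋃ x ∈ (Finset.univ : Finset (↥Q × (↥Q ≃ Fin Q.card))),
      (C ⁻¹' Ds x ∩ ST ⁻¹' {x}) := by
    ext ω
    simp only [Set.mem_iUnion, Set.mem_inter_iff, Set.mem_preimage,
      Set.mem_singleton_iff]
    constructor
    · intro hω
      exact ⟨ST ω, Finset.mem_univ _, hω, rfl⟩
    · rintro ⟨x, _, hx, hSTx⟩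
      subst hSTx
      exact hx
  have hsingle : ∀ x : ↥Q × (↥Q ≃ Fin Q.card),
      MeasurableSet ({x} : Set (↥Q × (↥Q ≃ Fin Q.card))) := by
    intro x
    have hxeq : ({x} : Set (↥Q × (↥Q ≃ Fin Q.card)))
        = ({x.1} : Set ↥Q) ×ˢ ({x.2} : Set (↥Q ≃ Fin Q.card)) := by
      ext y; simp [Prod.ext_iff]
    rw [hxeq]
    exact (MeasurableSpace.measurableSet_top).prod (MeasurableSpace.measurableSet_top)
  have hmeas_piece : ∀ x : ↥Q × (↥Q ≃ Fin Q.card),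
      MeasurableSet (C ⁻¹' Ds x ∩ ST ⁻¹' {x}) :=
    fun x => (hC (hDmeas x)).inter (hSTmeas (hsingle x))
  have hdisj : Set.PairwiseDisjoint
      ↑(Finset.univ : Finset (↥Q × (↥Q ≃ Fin Q.card)))
      (fun x => C ⁻¹' Ds x ∩ ST ⁻¹' {x}) := by
    intro x _ y _ hxy
    refine Set.disjoint_left.mpr ?_
    rintro ω ⟨-, hx⟩ ⟨-, hy⟩
    apply hxy
    have hx' : ST ω = x := hx
    have hy' : ST ω = y := hy
    rw [← hx', hy']
  have hstep : ∀ x : ↥Q × (↥Q ≃ Fin Q.card), x ∈ (Finset.univ : Finset _) →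
      μ (C ⁻¹' Ds x ∩ ST ⁻¹' {x}) = μ (C ⁻¹' Bs x) * (N : ℝ≥0∞)⁻¹ := by
    intro x _
    have h1 := hInd.measure_inter_preimage_eq_mul (Ds x) {x} (hDmeas x) (hsingle x)
    have h2 : μ (ST ⁻¹' {x}) = (N : ℝ≥0∞)⁻¹ := by
      rw [← Measure.map_apply hSTmeas (hsingle x), hUnif,
        PMF.toMeasure_apply_singleton _ _ (hsingle x),
        PMF.uniformOfFinset_apply]
      simp [hNdef]
    have h3 : μ (C ⁻¹' Ds x) = μ (C ⁻¹' Bs x) := by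
      calc μ (C ⁻¹' Ds x) = (μ.map C) (Ds x) :=
            (Measure.map_apply hC (hDmeas x)).symm
        _ = ((μ.map C).map (permSeq ((x.1 : Equiv.Perm (Fin (t + w))))⁻¹)) (Bs x) :=
            (Measure.map_apply (hmono_perm _) (hBmeas x.1 x.2)).symm
        _ = (μ.map C) (Bs x) := by rw [hinv]
        _ = μ (C ⁻¹' Bs x) := Measure.map_apply hC (hBmeas x.1 x.2)
    rw [h1, h2, h3]
  have hsum : μ A = (∑ x : ↥Q × (↥Q ≃ Fin Q.card), μ (C ⁻¹' Bs x)) * (N : ℝ≥0∞)⁻¹ := by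
    rw [hAeq, measure_biUnion_finset hdisj (fun x _ => hmeas_piece x),
      Finset.sum_congr rfl hstep, ← Finset.sum_mul]
  have hinner : ∀ p : ↥Q ≃ Fin Q.card,
      (∑ σ : ↥Q, μ (C ⁻¹' Bs (σ, p))) = (k : ℝ≥0∞) := by
    intro p
    have hmeasE : ∀ σ : ↥Q, MeasurableSet (C ⁻¹' Bs (σ, p)) :=
      fun σ => hC (hBmeas σ p)
    calc (∑ σ : ↥Q, μ (C ⁻¹' Bs (σ, p)))
        = ∑ σ : ↥Q, ∫⁻ ω, (C ⁻¹' Bs (σ, p)).indicator (1 : Ω → ℝ≥0∞) ω ∂μ := by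
          refine Finset.sum_congr rfl fun σ _ => ?_
          rw [lintegral_indicator_one (hmeasE σ)]
      _ = ∫⁻ ω, ∑ σ : ↥Q, (C ⁻¹' Bs (σ, p)).indicator (1 : Ω → ℝ≥0∞) ω ∂μ :=
          (lintegral_finset_sum _ (fun σ _ => (measurable_one.indicator (hmeasE σ)))).symm
      _ = ∫⁻ _, (k : ℝ≥0∞) ∂μ := by
          refine lintegral_congr fun ω => ?_
          have hind : ∀ σ : ↥Q, (C ⁻¹' Bs (σ, p)).indicator (1 : Ω → ℝ≥0∞) ω
              = if tbRank (Hfun (C ω)) p σ ≤ k then 1 else 0 := by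
            intro σ
            by_cases hcase : tbRank (Hfun (C ω)) p σ ≤ k
            · have hmem : ω ∈ C ⁻¹' Bs (σ, p) := hcase
              rw [Set.indicator_of_mem hmem, if_pos hcase]
              rfl
            · have hmem : ω ∉ C ⁻¹' Bs (σ, p) := hcase
              rw [Set.indicator_of_notMem hmem, if_neg hcase]
          rw [Finset.sum_congr rfl (fun σ _ => hind σ), Finset.sum_boole,
            card_tbRank_le (Hfun (C ω)) p k, Fintype.card_coe, min_eq_left hk_le]
      _ = (k : ℝ≥0∞) := by rw [lintegral_const, measure_univ, mul_one]
  set P := Fintype.card (↥Q ≃ Fin Q.card) with hPdef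
  have htotal : μ A = (P : ℝ≥0∞) * (k : ℝ≥0∞) * (N : ℝ≥0∞)⁻¹ := by
    rw [hsum]
    congr 1
    rw [Fintype.sum_prod_type, Finset.sum_comm,
      Finset.sum_congr rfl (fun p _ => hinner p), Finset.sum_const, Finset.card_univ,
      nsmul_eq_mul]
  have hN : N = Q.card * P := by
    rw [hNdef, Finset.card_univ, Fintype.card_prod, Fintype.card_coe]
  have hPpos : 0 < P := by
    obtain ⟨x, -⟩ := hne
    exact Fintype.card_pos_iff.mpr ⟨x.2⟩
  refine le_trans ?_ (measure_mono hsub)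
  rw [htotal, ← div_eq_mul_inv]
  have hNpos : 0 < N := by rw [hN]; exact Nat.mul_pos hQc hPpos
  have hN0 : (N : ℝ≥0∞) ≠ 0 := Nat.cast_ne_zero.mpr hNpos.ne'
  rw [ENNReal.le_div_iff_mul_le (Or.inl hN0) (Or.inl (ENNReal.natCast_ne_top N))]
  have e1 : ENNReal.ofReal (1 - δ) * (N : ℝ≥0∞) = ENNReal.ofReal ((1 - δ) * (N : ℝ)) := by
    rw [ENNReal.ofReal_mul hδ', ENNReal.ofReal_natCast]
  have e2 : (P : ℝ≥0∞) * (k : ℝ≥0∞) = ENNReal.ofReal ((P : ℝ) * (k : ℝ)) := by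
    rw [ENNReal.ofReal_mul (by positivity), ENNReal.ofReal_natCast, ENNReal.ofReal_natCast]
  rw [e1, e2]
  apply ENNReal.ofReal_le_ofReal
  have hcast : (N : ℝ) = (Q.card : ℝ) * (P : ℝ) := by rw [hN]; push_cast; ring
  rw [hcast]
  have h3 : (1 - δ) * (Q.card : ℝ) * (P : ℝ) ≤ (k : ℝ) * (P : ℝ) :=
    mul_le_mul_of_nonneg_right hk_ge (by positivity)
  nlinarith [h3]
end
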